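/- Let M ∈ ℝ^{m×m} be copositive-plus and let q ∈ ℝ^m satisfy {z ∈ ℝ^m : (M + Mᵀ)z = 0} ⊆ {z ∈ ℝ^m : qᵀ z = 0}. Then the quadratic function f(y) = yᵀ(My + q) is bounded below on the nonnegative orthant {y ∈ ℝ^m : y ≥ 0}. -/

import Mathlib

open scoped BigOperators
open Matrix

private lemma dot_skip {n : ℕ} (j : Fin (n+1)) (u v : Fin (n+1) → ℝ) (hu : u j = 0) :
    u ⬝ᵥ v = (fun i => u (j.succAbove i)) ⬝ᵥ (fun i => v (j.succAbove i)) := by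
  simp [dotProduct, Fin.sum_univ_succAbove (fun i => u i * v i) j, hu]

private lemma mulVec_skip {n : ℕ} (j : Fin (n+1)) (M : Matrix (Fin (n+1)) (Fin (n+1)) ℝ)
    (w : Fin (n+1) → ℝ) (hw : w j = 0) (i : Fin n) :
    (M.submatrix j.succAbove j.succAbove).mulVec (fun k => w (j.succAbove k)) i
      = M.mulVec w (j.succAbove i) := by
  simp only [mulVec, dotProduct, submatrix_apply]
  rw [Fin.sum_univ_succAbove (fun k => M (j.succAbove i) k * w k) j]
  simp [hw]

private lemma quad_skip {n : ℕ} (j : Fin (n+1)) (M : Matrix (Fin (n+1)) (Fin (n+1)) ℝ)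
    (q w : Fin (n+1) → ℝ) (hw : w j = 0) :
    w ⬝ᵥ (M.mulVec w + q)
      = (fun i => w (j.succAbove i)) ⬝ᵥ
        ((M.submatrix j.succAbove j.succAbove).mulVec (fun k => w (j.succAbove k))
          + fun i => q (j.succAbove i)) := by
  rw [dot_skip j _ _ hw]
  congr 1
  funext i
  simp [Pi.add_apply, mulVec_skip j M w hw i]

private lemma qf_skip {n : ℕ} (j : Fin (n+1)) (M : Matrix (Fin (n+1)) (Fin (n+1)) ℝ)
    (w : Fin (n+1) → ℝ) (hw : w j = 0) :
    w ⬝ᵥ M.mulVec w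
      = (fun i => w (j.succAbove i)) ⬝ᵥ
        (M.submatrix j.succAbove j.succAbove).mulVec (fun k => w (j.succAbove k)) := by
  rw [dot_skip j _ _ hw]
  congr 1
  funext i
  exact (mulVec_skip j M w hw i).symm

private theorem aux_bounded : ∀ (m : ℕ) (M : Matrix (Fin m) (Fin m) ℝ) (q : Fin m → ℝ),
    (∀ z : Fin m → ℝ, (∀ i, 0 ≤ z i) → 0 ≤ z ⬝ᵥ M.mulVec z) →
    (∀ z : Fin m → ℝ, (∀ i, 0 ≤ z i) → z ⬝ᵥ M.mulVec z = 0 →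
      (M + Mᵀ).mulVec z = 0 ∧ q ⬝ᵥ z = 0) →
    ∃ c : ℝ, ∀ y : Fin m → ℝ, (∀ i, 0 ≤ y i) → c ≤ y ⬝ᵥ (M.mulVec y + q) := by
  intro m
  induction m using Nat.strong_induction_on with
  | _ m IH =>
  intro M q hcopos hstrong
  by_cases hdeg : ∃ z : Fin m → ℝ, (∀ i, 0 ≤ z i) ∧ z ≠ 0 ∧ z ⬝ᵥ M.mulVec z = 0
  · -- degenerate direction exists
    obtain ⟨z, hz0, hzne, hzM⟩ := hdeg
    obtain ⟨hkerz, hqz⟩ := hstrong z hz0 hzM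
    obtain ⟨n, rfl⟩ : ∃ n, m = n + 1 := by
      cases m with
      | zero => exact absurd (funext fun i => i.elim0) hzne
      | succ n => exact ⟨n, rfl⟩
    -- bound on each face
    have hface : ∀ j : Fin (n+1), ∃ c : ℝ, ∀ u : Fin n → ℝ, (∀ i, 0 ≤ u i) →
        c ≤ u ⬝ᵥ ((M.submatrix j.succAbove j.succAbove).mulVec u + fun i => q (j.succAbove i)) := by
      intro j
      have hext : ∀ u : Fin n → ℝ,
          (fun k => (j.insertNth (α := fun _ => ℝ) 0 u) (j.succAbove k)) = u :=
        fun u => funext fun k => by simp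
      have hwj : ∀ u : Fin n → ℝ, (j.insertNth (α := fun _ => ℝ) 0 u) j = 0 :=
        fun u => by simp
      have hqf : ∀ u : Fin n → ℝ,
          (j.insertNth (α := fun _ => ℝ) 0 u) ⬝ᵥ M.mulVec (j.insertNth (α := fun _ => ℝ) 0 u)
            = u ⬝ᵥ (M.submatrix j.succAbove j.succAbove).mulVec u := by
        intro u
        rw [qf_skip j M _ (hwj u), hext u]
      have hnn : ∀ u : Fin n → ℝ, (∀ i, 0 ≤ u i) → ∀ i, 0 ≤ (j.insertNth (α := fun _ => ℝ) 0 u) i := by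
        intro u hu i
        refine Fin.succAboveCases j ?_ ?_ i
        · simp [hwj u]
        · intro k
          have he : (j.insertNth (α := fun _ => ℝ) 0 u) (j.succAbove k) = u k := by simp
          rw [he]
          exact hu k
      apply IH n (Nat.lt_succ_self n)
      · intro u hu
        have := hcopos (j.insertNth (α := fun _ => ℝ) 0 u) (hnn u hu)
        rwa [hqf u] at this
      · intro u hu huM
        have hwq : (j.insertNth (α := fun _ => ℝ) 0 u) ⬝ᵥ M.mulVec (j.insertNth (α := fun _ => ℝ) 0 u) = 0 := by
          rw [hqf u]; exact huM
        obtain ⟨hk, hq⟩ := hstrong (j.insertNth (α := fun _ => ℝ) 0 u) (hnn u hu) hwq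
        constructor
        · funext i
          have hsub : (M.submatrix j.succAbove j.succAbove)
              + (M.submatrix j.succAbove j.succAbove)ᵀ
              = (M + Mᵀ).submatrix j.succAbove j.succAbove := by
            ext a b; simp
          rw [hsub]
          have := mulVec_skip j (M + Mᵀ) (j.insertNth (α := fun _ => ℝ) 0 u) (hwj u) i
          rw [hext u] at this
          rw [this, hk]
          rfl
        · have h2 := dot_skip j (j.insertNth (α := fun _ => ℝ) 0 u) q (hwj u)
          rw [hext u] at h2
          rw [dotProduct_comm, ← h2, dotProduct_comm]
          exact hq
    choose cf hcf using hface
    refine ⟨Finset.univ.inf' Finset.univ_nonempty cf, ?_⟩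
    intro y hy
    obtain ⟨i0, hi0⟩ : ∃ i, 0 < z i := by
      by_contra h
      push_neg at h
      exact hzne (funext fun i => le_antisymm (h i) (hz0 i))
    set T : Finset (Fin (n+1)) := Finset.univ.filter (fun i => 0 < z i) with hT
    have hTne : T.Nonempty := ⟨i0, by simp [hT, hi0]⟩
    obtain ⟨j, hjT, hjmin⟩ := T.exists_min_image (fun i => y i / z i) hTne
    have hzj : 0 < z j := (Finset.mem_filter.mp hjT).2
    set l := y j / z j with hl
    have hl0 : 0 ≤ l := div_nonneg (hy j) hzj.le
    set y' : Fin (n+1) → ℝ := y - l • z with hy'def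
    have hy'0 : ∀ i, 0 ≤ y' i := by
      intro i
      by_cases hi : 0 < z i
      · have hji : l ≤ y i / z i := hjmin i (by simp [hT, hi])
        have : l * z i ≤ y i := by
          rw [le_div_iff₀ hi] at hji; linarith
        simp only [hy'def, Pi.sub_apply, Pi.smul_apply, smul_eq_mul]
        linarith
      · have hzi : z i = 0 := le_antisymm (not_lt.mp hi) (hz0 i)
        simp [hy'def, hzi, hy i]
    have hy'j : y' j = 0 := by
      have : l * z j = y j := by
        rw [hl]; field_simp
      simp [hy'def, this]
    -- translation invariance of the quadratic
    have hMz : M.mulVec z + Mᵀ.mulVec z = 0 := by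
      rw [← add_mulVec]; exact hkerz
    have hfe : y' ⬝ᵥ (M.mulVec y' + q) = y ⬝ᵥ (M.mulVec y + q) := by
      have h1 : y ⬝ᵥ M.mulVec z + y ⬝ᵥ Mᵀ.mulVec z = 0 := by
        rw [← dotProduct_add, hMz, dotProduct_zero]
      have h2 : z ⬝ᵥ M.mulVec y = y ⬝ᵥ Mᵀ.mulVec z := by
        rw [dotProduct_mulVec, ← mulVec_transpose, dotProduct_comm]
      have h3 : z ⬝ᵥ q = 0 := by rw [dotProduct_comm]; exact hqz
      simp only [hy'def, mulVec_sub, mulVec_smul, dotProduct_add, dotProduct_sub,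
        sub_dotProduct, smul_dotProduct, dotProduct_smul, smul_eq_mul]
      linear_combination (-l) * h1 + (-l) * h2 + l * l * hzM - l * h3
    have hb := hcf j (fun i => y' (j.succAbove i)) (fun i => hy'0 _)
    calc Finset.univ.inf' Finset.univ_nonempty cf ≤ cf j :=
          Finset.inf'_le _ (Finset.mem_univ j)
      _ ≤ _ := hb
      _ = y' ⬝ᵥ (M.mulVec y' + q) := (quad_skip j M q y' hy'j).symm
      _ = y ⬝ᵥ (M.mulVec y + q) := hfe
  · -- strict copositivity: compactness argument
    push_neg at hdeg
    by_cases hm : m = 0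
    · subst hm
      refine ⟨0, fun y _ => ?_⟩
      simp [dotProduct]
    · have hmpos : 0 < m := Nat.pos_of_ne_zero hm
      have hne : (stdSimplex ℝ (Fin m)).Nonempty := by
        refine ⟨fun _ => (m : ℝ)⁻¹, fun _ => by positivity, ?_⟩
        rw [Finset.sum_const, Finset.card_univ, Fintype.card_fin, nsmul_eq_mul]
        field_simp
      have hcont : Continuous fun v : Fin m → ℝ => v ⬝ᵥ M.mulVec v := by
        simp only [dotProduct, mulVec]
        fun_prop
      obtain ⟨z0, hz0S, hmin'⟩ :=
        (isCompact_stdSimplex ℝ (Fin m)).exists_isMinOn hne hcont.continuousOn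
      have hmin : ∀ v ∈ stdSimplex ℝ (Fin m), z0 ⬝ᵥ M.mulVec z0 ≤ v ⬝ᵥ M.mulVec v :=
        fun v hv => hmin' hv
      set μ := z0 ⬝ᵥ M.mulVec z0 with hμ
      have hz0ne : z0 ≠ 0 := by
        intro h
        have := hz0S.2
        rw [h] at this
        simp at this
      have hμpos : 0 < μ :=
        lt_of_le_of_ne (hcopos z0 hz0S.1) (Ne.symm (hdeg z0 hz0S.1 hz0ne))
      set Q := ∑ i, |q i| with hQ
      refine ⟨min 0 (-(Q^2) / (4*μ)), ?_⟩
      intro y hy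
      set s := ∑ i, y i with hs
      have hs0 : 0 ≤ s := Finset.sum_nonneg fun i _ => hy i
      rcases eq_or_lt_of_le hs0 with hse | hsp
      · have hy0 : y = 0 := by
          funext i
          exact (Finset.sum_eq_zero_iff_of_nonneg (fun i _ => hy i)).mp hse.symm i
            (Finset.mem_univ i)
        rw [hy0, zero_dotProduct]
        exact min_le_left _ _
      · have hzS : (s⁻¹ • y) ∈ stdSimplex ℝ (Fin m) := by
          constructor
          · intro i
            have := hy i
            have hsi : 0 ≤ s⁻¹ := inv_nonneg.mpr hs0
            simpa [smul_eq_mul] using mul_nonneg hsi this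
          · simp only [Pi.smul_apply, smul_eq_mul]
            rw [← Finset.mul_sum, ← hs]
            field_simp
        have h1 : μ ≤ (s⁻¹ • y) ⬝ᵥ M.mulVec (s⁻¹ • y) := hmin _ hzS
        have h2 : (s⁻¹ • y) ⬝ᵥ M.mulVec (s⁻¹ • y) = s⁻¹ * s⁻¹ * (y ⬝ᵥ M.mulVec y) := by
          rw [mulVec_smul, dotProduct_smul, smul_dotProduct]
          simp [smul_eq_mul]; ring
        have hinv : s * s⁻¹ = 1 := mul_inv_cancel₀ hsp.ne'
        have h3 : μ * s * s ≤ y ⬝ᵥ M.mulVec y := by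
          rw [h2] at h1
          have hmul := mul_le_mul_of_nonneg_left h1 (mul_nonneg hs0 hs0)
          calc μ * s * s = s * s * μ := by ring
            _ ≤ s * s * (s⁻¹ * s⁻¹ * (y ⬝ᵥ M.mulVec y)) := hmul
            _ = (s * s⁻¹) * (s * s⁻¹) * (y ⬝ᵥ M.mulVec y) := by ring
            _ = y ⬝ᵥ M.mulVec y := by rw [hinv]; ring
        have hyle : ∀ i, y i ≤ s := fun i =>
          Finset.single_le_sum (fun k _ => hy k) (Finset.mem_univ i)
        have h4 : -(Q * s) ≤ y ⬝ᵥ q := by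
          rw [dotProduct, hQ, Finset.sum_mul, ← Finset.sum_neg_distrib]
          refine Finset.sum_le_sum fun i _ => ?_
          nlinarith [hy i, hyle i, neg_abs_le (q i), abs_nonneg (q i)]
        have h5 : y ⬝ᵥ (M.mulVec y + q) = y ⬝ᵥ M.mulVec y + y ⬝ᵥ q := dotProduct_add _ _ _
        have : -(Q^2) / (4*μ) ≤ y ⬝ᵥ (M.mulVec y + q) := by
          rw [h5, div_le_iff₀ (by positivity : (0:ℝ) < 4*μ)]
          have hX : μ * s * s - Q * s ≤ y ⬝ᵥ M.mulVec y + y ⬝ᵥ q := by linarith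
          have hmul := mul_le_mul_of_nonneg_right hX (by positivity : (0:ℝ) ≤ 4*μ)
          nlinarith [sq_nonneg (2*μ*s - Q), hmul]
        exact le_trans (min_le_right _ _) this

theorem stmt_7 {m : ℕ}
    (M : Matrix (Fin m) (Fin m) ℝ) (q : Fin m → ℝ)
    -- `M` is copositive:
    (hcopos : ∀ z : Fin m → ℝ, (∀ i, 0 ≤ z i) → 0 ≤ z ⬝ᵥ M.mulVec z)
    -- `M` is copositive-plus:
    (hplus : ∀ z : Fin m → ℝ, (∀ i, 0 ≤ z i) → z ⬝ᵥ M.mulVec z = 0 → (M + Mᵀ).mulVec z = 0)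
    -- kernel inclusion:
    (hker : ∀ z : Fin m → ℝ, (M + Mᵀ).mulVec z = 0 → q ⬝ᵥ z = 0) :
    ∃ c : ℝ, ∀ y : Fin m → ℝ, (∀ i, 0 ≤ y i) → c ≤ y ⬝ᵥ (M.mulVec y + q) := by
  exact aux_bounded m M q hcopos
    (fun z hz hzM => ⟨hplus z hz hzM, hker z (hplus z hz hzM)⟩)
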